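/- arXiv:1104.1845 — 2 statements merged into one kernel-verified Lean document; each statement's English description precedes it below -/
import Mathlib

section
/- Let 0 < δ < 1, let q, Q be continuous functions on the annulus 𝒜_δ = {1−δ ≤ |z| ≤ 1} with |q| ≤ q₀ and |Q| ≤ Q₀, and let w be a C¹ solution of w_z̄ = q·w_z + Q on 𝒜_δ with ε ≤ |w| for some ε > 0 and |w(z)| = 1 whenever |z| = 1. Let σ(z) = 1/conj(z) denote reflection in the unit circle and 𝒜*_δ = σ(𝒜_δ) = {1 ≤ |z| ≤ 1/(1−δ)}. Define on 𝒜*_δ: w̃(z) = 1/conj(w(σ(z))), q̃(z) = conj(q(σ(z)))·z²·σ(z)², and Q̃(z) = conj(Q(σ(z)))·σ(z)²·w̃(z)². Then w̃ is C¹ in the interior of 𝒜*_δ and satisfies w̃_z̄ = q̃·w̃_z + Q̃ there; moreover |q̃| ≤ q₀ and |Q̃| ≤ Q₀/ε² on 𝒜*_δ, and w̃ agrees with w on the unit circle, so that w and w̃ together define a continuous function on 𝒜_δ ∪ 𝒜*_δ. -/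
open Complex Metric

noncomputable section

/-- The closed annulus `𝒜_δ = {z ∈ ℂ : 1 − δ ≤ |z| ≤ 1}`. -/
def annulus (δ : ℝ) : Set ℂ :=
  {z : ℂ | 1 - δ ≤ ‖z‖ ∧ ‖z‖ ≤ 1}

/-- The reflected annulus `𝒜*_δ = {z ∈ ℂ : 1 ≤ |z| ≤ 1/(1 − δ)}`. -/
def annulusStar (δ : ℝ) : Set ℂ :=
  {z : ℂ | 1 ≤ ‖z‖ ∧ ‖z‖ ≤ (1 - δ)⁻¹}

/-- Reflection in the unit circle: `σ(z) = 1/conj(z)`. -/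
def circleReflection (z : ℂ) : ℂ := ((starRingEnd ℂ) z)⁻¹

/-- The Wirtinger derivative `w_z̄ = (w_x + i w_y)/2` computed within the set `s`. -/
def dbarOn (w : ℂ → ℂ) (s : Set ℂ) (z : ℂ) : ℂ :=
  (2⁻¹ : ℂ) * (fderivWithin ℝ w s z 1 + Complex.I * fderivWithin ℝ w s z Complex.I)

/-- The Wirtinger derivative `w_z = (w_x − i w_y)/2` computed within the set `s`. -/
def dzOn (w : ℂ → ℂ) (s : Set ℂ) (z : ℂ) : ℂ :=
  (2⁻¹ : ℂ) * (fderivWithin ℝ w s z 1 - Complex.I * fderivWithin ℝ w s z Complex.I)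

/-- The Wirtinger derivative `w_z̄ = (w_x + i w_y)/2` (full derivative). -/
def dbarC (w : ℂ → ℂ) (z : ℂ) : ℂ :=
  (2⁻¹ : ℂ) * (fderiv ℝ w z 1 + Complex.I * fderiv ℝ w z Complex.I)

/-- The Wirtinger derivative `w_z = (w_x − i w_y)/2` (full derivative). -/
def dzC (w : ℂ → ℂ) (z : ℂ) : ℂ :=
  (2⁻¹ : ℂ) * (fderiv ℝ w z 1 - Complex.I * fderiv ℝ w z Complex.I)

/-- The reflected solution `w̃(z) = 1/conj(w(σ(z)))`. -/
def reflW (w : ℂ → ℂ) (z : ℂ) : ℂ :=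
  ((starRingEnd ℂ) (w (circleReflection z)))⁻¹

/-- The reflected coefficient `q̃(z) = conj(q(σ(z)))·z²·σ(z)²`. -/
def reflq (q : ℂ → ℂ) (z : ℂ) : ℂ :=
  (starRingEnd ℂ) (q (circleReflection z)) * z ^ 2 * (circleReflection z) ^ 2

/-- The reflected coefficient `Q̃(z) = conj(Q(σ(z)))·σ(z)²·w̃(z)²`. -/
def reflQ (Q w : ℂ → ℂ) (z : ℂ) : ℂ :=
  (starRingEnd ℂ) (Q (circleReflection z)) * (circleReflection z) ^ 2 * (reflW w z) ^ 2

/-! ### Auxiliary lemmas -/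

lemma clm_decomp (L : ℂ →L[ℝ] ℂ) (v : ℂ) :
    L v = (2⁻¹ : ℂ) * (L 1 - Complex.I * L Complex.I) * v
        + (2⁻¹ : ℂ) * (L 1 + Complex.I * L Complex.I) * (starRingEnd ℂ v) := by
  have hv : v = v.re • (1:ℂ) + v.im • Complex.I := by
    simp [real_smul, Complex.re_add_im]
  rw [hv, map_add, map_smul, map_smul]
  simp only [real_smul, map_add, map_smul, Complex.conj_I, map_one, Complex.conj_ofReal,
    map_mul]
  ring_nf
  simp [Complex.ext_iff]

lemma contDiff_conj' : ContDiff ℝ 1 (starRingEnd ℂ) :=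
  Complex.conjCLE.contDiff.of_le le_top

lemma hasFDerivAt_conj' (z : ℂ) :
    HasFDerivAt (starRingEnd ℂ) (Complex.conjCLE.toContinuousLinearMap) z :=
  Complex.conjCLE.hasFDerivAt

lemma reflW_key (w : ℂ → ℂ) (z : ℂ) (hz : z ≠ 0)
    (hw : ContDiffAt ℝ 1 w (circleReflection z))
    (hwne : w (circleReflection z) ≠ 0) :
    ContDiffAt ℝ 1 (reflW w) z ∧
    dzC (reflW w) z
      = starRingEnd ℂ (dzC w (circleReflection z)) * (z ^ 2)⁻¹ * (reflW w z) ^ 2 ∧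
    dbarC (reflW w) z
      = starRingEnd ℂ (dbarC w (circleReflection z)) * (circleReflection z) ^ 2
        * (reflW w z) ^ 2 := by
  have hcz : (starRingEnd ℂ) z ≠ 0 := by simpa using hz
  have hcw : (starRingEnd ℂ) (w (circleReflection z)) ≠ 0 := by simpa using hwne
  have hσ : ContDiffAt ℝ 1 circleReflection z :=
    (contDiffAt_inv ℝ hcz).comp z contDiff_conj'.contDiffAt
  have hcd : ContDiffAt ℝ 1 (reflW w) z :=
    (contDiffAt_inv ℝ hcw).comp z
      (contDiff_conj'.contDiffAt.comp z (hw.comp z hσ))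
  refine ⟨hcd, ?_⟩
  have hinv1 : HasFDerivAt (Inv.inv : ℂ → ℂ)
      (((1 : ℂ →L[ℂ] ℂ).smulRight (-((starRingEnd ℂ z) ^ 2)⁻¹)).restrictScalars ℝ)
      ((starRingEnd ℂ) z) :=
    ((hasDerivAt_inv hcz).hasFDerivAt).restrictScalars ℝ
  have hDσ : HasFDerivAt circleReflection
      ((((1 : ℂ →L[ℂ] ℂ).smulRight (-((starRingEnd ℂ z) ^ 2)⁻¹)).restrictScalars ℝ).comp
        Complex.conjCLE.toContinuousLinearMap) z :=
    hinv1.comp z (hasFDerivAt_conj' z)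
  set L := fderiv ℝ w (circleReflection z) with hLdef
  have hL : HasFDerivAt w L (circleReflection z) := (hw.differentiableAt one_ne_zero).hasFDerivAt
  have hinv2 : HasFDerivAt (Inv.inv : ℂ → ℂ)
      (((1 : ℂ →L[ℂ] ℂ).smulRight
        (-((starRingEnd ℂ (w (circleReflection z))) ^ 2)⁻¹)).restrictScalars ℝ)
      ((starRingEnd ℂ) (w (circleReflection z))) :=
    ((hasDerivAt_inv hcw).hasFDerivAt).restrictScalars ℝ
  have hfinal : HasFDerivAt (reflW w)
      ((((1 : ℂ →L[ℂ] ℂ).smulRight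
          (-((starRingEnd ℂ (w (circleReflection z))) ^ 2)⁻¹)).restrictScalars ℝ).comp
        ((Complex.conjCLE.toContinuousLinearMap).comp
          (L.comp
            ((((1 : ℂ →L[ℂ] ℂ).smulRight
              (-((starRingEnd ℂ z) ^ 2)⁻¹)).restrictScalars ℝ).comp
              Complex.conjCLE.toContinuousLinearMap)))) z :=
    hinv2.comp z ((hasFDerivAt_conj' (w (circleReflection z))).comp z (hL.comp z hDσ))
  have hfd := hfinal.fderiv
  have e1 : fderiv ℝ (reflW w) z 1 = _ := congrArg (fun (T : ℂ →L[ℝ] ℂ) => T 1) hfd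
  have eI : fderiv ℝ (reflW w) z Complex.I = _ :=
    congrArg (fun (T : ℂ →L[ℝ] ℂ) => T Complex.I) hfd
  simp only [ContinuousLinearMap.comp_apply, ContinuousLinearMap.coe_restrictScalars',
    ContinuousLinearMap.smulRight_apply, ContinuousLinearMap.one_apply,
    ContinuousLinearEquiv.coe_coe, Complex.conjCLE_apply, smul_eq_mul, map_one,
    Complex.conj_I] at e1 eI
  rw [clm_decomp L] at e1 eI
  have hrw : reflW w z = ((starRingEnd ℂ) (w (circleReflection z)))⁻¹ := rfl
  constructor
  · show (2⁻¹:ℂ) * (fderiv ℝ (reflW w) z 1 - Complex.I * fderiv ℝ (reflW w) z Complex.I) = _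
    rw [e1, eI, hrw]
    rw [show dzC w (circleReflection z) = (2⁻¹:ℂ)*(L 1 - Complex.I * L Complex.I) from rfl]
    simp only [map_add, map_mul, map_sub, map_neg, map_inv₀, map_pow, map_one,
      Complex.conj_conj, Complex.conj_I, map_ofNat, inv_pow, mul_one, one_mul,
      mul_neg, neg_neg, neg_mul]
    ring_nf
    simp only [Complex.I_sq, show Complex.I ^ 3 = -Complex.I by
      rw [pow_succ, Complex.I_sq]; ring]
    ring
  · show (2⁻¹:ℂ) * (fderiv ℝ (reflW w) z 1 + Complex.I * fderiv ℝ (reflW w) z Complex.I) = _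
    rw [e1, eI, hrw]
    rw [show dbarC w (circleReflection z) = (2⁻¹:ℂ)*(L 1 + Complex.I * L Complex.I) from rfl]
    rw [show (circleReflection z : ℂ) = ((starRingEnd ℂ) z)⁻¹ from rfl]
    simp only [map_add, map_mul, map_sub, map_neg, map_inv₀, map_pow, map_one,
      Complex.conj_conj, Complex.conj_I, map_ofNat, inv_pow, mul_one, one_mul,
      mul_neg, neg_neg, neg_mul]
    ring_nf
    simp only [Complex.I_sq, show Complex.I ^ 3 = -Complex.I by
      rw [pow_succ, Complex.I_sq]; ring]
    ring

lemma abs_circleReflection (z : ℂ) :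
    ‖circleReflection z‖ = (‖z‖)⁻¹ := by
  simp [circleReflection, map_inv₀]

lemma circleReflection_mem_annulus {δ : ℝ} (hδ1 : δ < 1) {z : ℂ}
    (hz : z ∈ annulusStar δ) : circleReflection z ∈ annulus δ := by
  obtain ⟨h1, h2⟩ := hz
  have h0 : (0:ℝ) < 1 - δ := by linarith
  have hzpos : (0:ℝ) < ‖z‖ := by linarith
  rw [annulus, Set.mem_setOf_eq, abs_circleReflection]
  constructor
  · have := inv_anti₀ hzpos h2
    simpa using this
  · simpa using inv_le_one_of_one_le₀ h1

lemma mem_interior_annulusStar {δ : ℝ} (hδ : 0 < δ) (hδ1 : δ < 1) {z : ℂ}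
    (hz : z ∈ interior (annulusStar δ)) :
    1 < ‖z‖ ∧ ‖z‖ < (1 - δ)⁻¹ := by
  obtain ⟨h1, h2⟩ := interior_subset hz
  have h0 : (0:ℝ) < 1 - δ := by linarith
  have hzpos : (0:ℝ) < ‖z‖ := by linarith
  have hnhds : annulusStar δ ∈ nhds z := mem_interior_iff_mem_nhds.1 hz
  have hc : ContinuousAt (fun t : ℝ => (t : ℂ) * z) 1 := by fun_prop
  have hev : ∀ᶠ t : ℝ in nhds 1, (t : ℂ) * z ∈ annulusStar δ := by
    apply hc.eventually_mem
    simpa using hnhds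
  have habs : ∀ t : ℝ, 0 < t → ‖(t : ℂ) * z‖ = t * ‖z‖ := by
    intro t ht
    simp [norm_mul, abs_of_pos ht]
  constructor
  · rcases lt_or_eq_of_le h1 with h | h
    · exact h
    · exfalso
      have hev' : ∀ᶠ t : ℝ in nhdsWithin 1 (Set.Iio 1),
          (t : ℂ) * z ∈ annulusStar δ := hev.filter_mono nhdsWithin_le_nhds
      have hev2 : ∀ᶠ t : ℝ in nhdsWithin 1 (Set.Iio 1), (0:ℝ) < t :=
        eventually_nhdsWithin_of_eventually_nhds (eventually_gt_nhds (by norm_num))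
      have hev3 : ∀ᶠ t : ℝ in nhdsWithin 1 (Set.Iio 1), t < 1 :=
        eventually_mem_nhdsWithin.mono (fun t ht => ht)
      obtain ⟨t, ht⟩ := ((hev'.and hev2).and hev3).exists
      obtain ⟨⟨htS, htpos⟩, htlt⟩ := ht
      have := htS.1
      rw [habs t htpos, ← h] at this
      linarith
  · rcases lt_or_eq_of_le h2 with h | h
    · exact h
    · exfalso
      have hev' : ∀ᶠ t : ℝ in nhdsWithin 1 (Set.Ioi 1),
          (t : ℂ) * z ∈ annulusStar δ := hev.filter_mono nhdsWithin_le_nhds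
      have hev3 : ∀ᶠ t : ℝ in nhdsWithin 1 (Set.Ioi 1), 1 < t :=
        eventually_mem_nhdsWithin.mono (fun t ht => ht)
      obtain ⟨t, htS, htgt⟩ := (hev'.and hev3).exists
      have htpos : (0:ℝ) < t := by linarith
      have := htS.2
      rw [habs t htpos, h] at this
      nlinarith [inv_pos.2 h0]

/-- **Reflection principle for the Beltrami-type equation**: the reflection
`w̃(z) = 1/conj(w(1/conj z))` of a solution of `w_z̄ = q·w_z + Q` on the annulus `𝒜_δ` with
`|w| = 1` on the unit circle is `C¹` in the interior of `𝒜*_δ` and solves there the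
reflected equation `w̃_z̄ = q̃·w̃_z + Q̃` with `|q̃| ≤ q₀`, `|Q̃| ≤ Q₀/ε²`; it agrees with `w`
on the unit circle, so `w` and `w̃` glue to a continuous function on `𝒜_δ ∪ 𝒜*_δ`. -/
theorem beltrami_reflection (δ ε q₀ Q₀ : ℝ)
    (hδ : 0 < δ) (hδ1 : δ < 1) (hε : 0 < ε)
    (q Q w : ℂ → ℂ)
    (hq : ContinuousOn q (annulus δ))
    (hQ : ContinuousOn Q (annulus δ))
    (hqb : ∀ z ∈ annulus δ, ‖q z‖ ≤ q₀)
    (hQb : ∀ z ∈ annulus δ, ‖Q z‖ ≤ Q₀)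
    (hw : ContDiffOn ℝ 1 w (annulus δ))
    (heq : ∀ z ∈ annulus δ,
      dbarOn w (annulus δ) z = q z * dzOn w (annulus δ) z + Q z)
    (hlow : ∀ z ∈ annulus δ, ε ≤ ‖w z‖)
    (hcirc : ∀ z : ℂ, ‖z‖ = 1 → ‖w z‖ = 1) :
    ContDiffOn ℝ 1 (reflW w) (interior (annulusStar δ)) ∧
    (∀ z ∈ interior (annulusStar δ),
      dbarC (reflW w) z = reflq q z * dzC (reflW w) z + reflQ Q w z) ∧
    (∀ z ∈ annulusStar δ, ‖reflq q z‖ ≤ q₀) ∧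
    (∀ z ∈ annulusStar δ, ‖reflQ Q w z‖ ≤ Q₀ / ε ^ 2) ∧
    (∀ z : ℂ, ‖z‖ = 1 → reflW w z = w z) ∧
    ContinuousOn (fun z => if ‖z‖ ≤ 1 then w z else reflW w z)
      (annulus δ ∪ annulusStar δ) := by
  have h0 : (0:ℝ) < 1 - δ := by linarith
  have hwne : ∀ z ∈ annulus δ, w z ≠ 0 := by
    intro z hz hz0
    have := hlow z hz
    rw [hz0] at this
    simp at this
    linarith
  -- key facts at interior points
  have hkey : ∀ z ∈ interior (annulusStar δ),
      ContDiffAt ℝ 1 (reflW w) z ∧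
      dzC (reflW w) z
        = starRingEnd ℂ (dzC w (circleReflection z)) * (z ^ 2)⁻¹ * (reflW w z) ^ 2 ∧
      dbarC (reflW w) z
        = starRingEnd ℂ (dbarC w (circleReflection z)) * (circleReflection z) ^ 2
          * (reflW w z) ^ 2 ∧
      annulus δ ∈ nhds (circleReflection z) ∧ z ≠ 0 := by
    intro z hz
    obtain ⟨hz1, hz2⟩ := mem_interior_annulusStar hδ hδ1 hz
    have hz0 : z ≠ 0 := by
      intro h; rw [h] at hz1; simp at hz1; linarith
    have hσ1 : 1 - δ < ‖circleReflection z‖ := by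
      rw [abs_circleReflection]
      have hzpos : (0:ℝ) < ‖z‖ := by linarith
      have := inv_strictAnti₀ hzpos hz2
      simpa using this
    have hσ2 : ‖circleReflection z‖ < 1 := by
      rw [abs_circleReflection]
      exact inv_lt_one_of_one_lt₀ hz1
    have hopen : IsOpen {x : ℂ | 1 - δ < ‖x‖ ∧ ‖x‖ < 1} := by
      have : {x : ℂ | 1 - δ < ‖x‖ ∧ ‖x‖ < 1}
          = (fun x : ℂ => ‖x‖) ⁻¹' (Set.Ioo (1-δ) 1) := rfl
      rw [this]
      exact isOpen_Ioo.preimage continuous_norm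
    have hnh : annulus δ ∈ nhds (circleReflection z) := by
      apply _root_.mem_nhds_iff.2
      exact ⟨_, fun x hx => ⟨le_of_lt hx.1, le_of_lt hx.2⟩, hopen, ⟨hσ1, hσ2⟩⟩
    have hσmem : circleReflection z ∈ annulus δ := circleReflection_mem_annulus hδ1
      (interior_subset hz)
    have hwa : ContDiffAt ℝ 1 w (circleReflection z) := hw.contDiffAt hnh
    have hwne' : w (circleReflection z) ≠ 0 := hwne _ hσmem
    obtain ⟨hc, hdz, hdb⟩ := reflW_key w z hz0 hwa hwne'
    exact ⟨hc, hdz, hdb, hnh, hz0⟩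
  refine ⟨?_, ?_, ?_, ?_, ?_, ?_⟩
  -- 1. C¹ smoothness
  · intro z hz
    exact ((hkey z hz).1).contDiffWithinAt
  -- 2. the reflected equation
  · intro z hz
    obtain ⟨hc, hdz, hdb, hnh, hz0⟩ := hkey z hz
    have hσmem : circleReflection z ∈ annulus δ :=
      circleReflection_mem_annulus hδ1 (interior_subset hz)
    have hpde := heq _ hσmem
    rw [dbarOn, dzOn, fderivWithin_of_mem_nhds hnh] at hpde
    have hpde' : dbarC w (circleReflection z)
        = q (circleReflection z) * dzC w (circleReflection z) + Q (circleReflection z) := hpde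
    rw [hdb, hdz, hpde', reflq, reflQ]
    simp only [map_add, map_mul]
    field_simp
  -- 3. bound on q̃
  · intro z hz
    have hz0 : ‖z‖ ≠ 0 := by
      have := hz.1; intro h; rw [h] at this; linarith
    have hσmem := circleReflection_mem_annulus hδ1 hz
    have : ‖reflq q z‖
        = ‖q (circleReflection z)‖ := by
      rw [reflq]
      simp only [norm_mul, norm_pow, Complex.norm_conj, abs_circleReflection]
      field_simp
    rw [this]
    exact hqb _ hσmem
  -- 4. bound on Q̃
  · intro z hz
    have hσmem := circleReflection_mem_annulus hδ1 hz
    have hQ0 : 0 ≤ Q₀ := le_trans (norm_nonneg _) (hQb _ hσmem)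
    have h1 : ‖Q (circleReflection z)‖ ≤ Q₀ := hQb _ hσmem
    have h2 : ‖circleReflection z‖ ≤ 1 := hσmem.2
    have h3 : ‖reflW w z‖ ≤ ε⁻¹ := by
      rw [reflW, norm_inv, Complex.norm_conj]
      exact inv_anti₀ hε (hlow _ hσmem)
    have habs : ‖reflQ Q w z‖
        = ‖Q (circleReflection z)‖ * ‖circleReflection z‖ ^ 2
          * ‖reflW w z‖ ^ 2 := by
      rw [reflQ]; simp [norm_mul, norm_pow, Complex.norm_conj]
    rw [habs]
    have step1 : ‖Q (circleReflection z)‖ * ‖circleReflection z‖ ^ 2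
        ≤ Q₀ := by
      have hs2 : ‖circleReflection z‖ ^ 2 ≤ 1 := by
        nlinarith [norm_nonneg (circleReflection z)]
      calc ‖Q (circleReflection z)‖ * ‖circleReflection z‖ ^ 2
          ≤ Q₀ * 1 := mul_le_mul h1 hs2 (by positivity) hQ0
        _ = Q₀ := mul_one _
    have step2 : ‖reflW w z‖ ^ 2 ≤ (ε⁻¹) ^ 2 := by
      have := norm_nonneg (reflW w z)
      nlinarith
    have := mul_le_mul step1 step2 (by positivity) hQ0
    calc ‖Q (circleReflection z)‖ * ‖circleReflection z‖ ^ 2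
          * ‖reflW w z‖ ^ 2 ≤ Q₀ * (ε⁻¹) ^ 2 := this
      _ = Q₀ / ε ^ 2 := by rw [div_eq_mul_inv, inv_pow]
  -- 5. agreement on the circle
  · intro z hz
    have hconj : ∀ u : ℂ, ‖u‖ = 1 → (starRingEnd ℂ) u = u⁻¹ := by
      intro u hu
      have : u * (starRingEnd ℂ) u = 1 := by
        rw [Complex.mul_conj]
        rw [Complex.normSq_eq_norm_sq, hu]
        norm_num
      exact eq_inv_of_mul_eq_one_right this
    have hσz : circleReflection z = z := by
      rw [circleReflection, hconj z hz, inv_inv]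
    rw [reflW, hσz, hconj (w z) (hcirc z hz), inv_inv]
  -- 6. continuity of the glued function
  · have hclosedA : IsClosed (annulus δ) := by
      have : annulus δ = (fun x : ℂ => ‖x‖) ⁻¹' (Set.Icc (1-δ) 1) := rfl
      rw [this]
      exact (isClosed_Icc).preimage continuous_norm
    have hclosedS : IsClosed (annulusStar δ) := by
      have : annulusStar δ = (fun x : ℂ => ‖x‖) ⁻¹' (Set.Icc 1 (1-δ)⁻¹) := rfl
      rw [this]
      exact (isClosed_Icc).preimage continuous_norm
    have hContW : ContinuousOn w (annulus δ) := hw.continuousOn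
    have hσcont : ContinuousOn circleReflection (annulusStar δ) := by
      apply ContinuousOn.inv₀
      · exact (Complex.continuous_conj.continuousOn)
      · intro z hz
        have : (1:ℝ) ≤ ‖z‖ := hz.1
        intro h
        rw [show z = 0 by simpa using h] at this
        simp at this
        linarith
    have hContR : ContinuousOn (reflW w) (annulusStar δ) := by
      have hmaps : Set.MapsTo circleReflection (annulusStar δ) (annulus δ) :=
        fun z hz => circleReflection_mem_annulus hδ1 hz
      apply ContinuousOn.inv₀
      · exact Complex.continuous_conj.comp_continuousOn (hContW.comp hσcont hmaps)
      · intro z hz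
        have := hwne _ (hmaps hz)
        simpa using this
    have hagreeA : ∀ x ∈ annulus δ,
        (if ‖x‖ ≤ 1 then w x else reflW w x) = w x := by
      intro x hx
      rw [if_pos hx.2]
    have hagreeS : ∀ x ∈ annulusStar δ,
        (if ‖x‖ ≤ 1 then w x else reflW w x) = reflW w x := by
      intro x hx
      by_cases h : ‖x‖ ≤ 1
      · rw [if_pos h]
        have h1 : ‖x‖ = 1 := le_antisymm h hx.1
        have hconj : ∀ u : ℂ, ‖u‖ = 1 → (starRingEnd ℂ) u = u⁻¹ := by
          intro u hu
          have : u * (starRingEnd ℂ) u = 1 := by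
            rw [Complex.mul_conj, Complex.normSq_eq_norm_sq, hu]
            norm_num
          exact eq_inv_of_mul_eq_one_right this
        have hσz : circleReflection x = x := by
          rw [circleReflection, hconj x h1, inv_inv]
        rw [reflW, hσz, hconj (w x) (hcirc x h1), inv_inv]
      · rw [if_neg h]
    intro x hx
    apply ContinuousWithinAt.union
    · by_cases hxA : x ∈ annulus δ
      · exact ((hContW x hxA).congr hagreeA (hagreeA x hxA))
      · exact continuousWithinAt_of_notMem_closure (by rwa [hclosedA.closure_eq])
    · by_cases hxS : x ∈ annulusStar δ
      · exact ((hContR x hxS).congr hagreeS (hagreeS x hxS))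
      · exact continuousWithinAt_of_notMem_closure (by rwa [hclosedS.closure_eq])
end
end

section
/- Let J be an ℝ-linear endomorphism of ℂ² with J ∘ J = −Id such that J_st + J is invertible, where J_st denotes multiplication by i, and let A ∈ M₂(ℂ) be the complex matrix of J, i.e. the unique complex 2×2 matrix with A·V = (J_st + J)^{-1}((J_st − J)(conj V)) for all V ∈ ℂ² (conj denoting componentwise complex conjugation). Then J is tamed by the standard symplectic form, i.e. ω_st(V, JV) > 0 for every nonzero V ∈ ℂ², if and only if the operator norm of A is strictly less than 1. -/
open Complex

noncomputable section

/-- The standard symplectic form `ω_st` on `ℂ² ≅ ℝ⁴`. -/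
def omegaSt (v w : ℂ × ℂ) : ℝ :=
  ((starRingEnd ℂ) v.1 * w.1).im + ((starRingEnd ℂ) v.2 * w.2).im

/-- The standard complex structure on `ℂ²` (multiplication by `i`), as an ℝ-linear map. -/
def Jst : (ℂ × ℂ) →ₗ[ℝ] (ℂ × ℂ) :=
  (LinearMap.lsmul ℂ (ℂ × ℂ) Complex.I).restrictScalars ℝ

/-- Componentwise complex conjugation on `ℂ²`. -/
def conj2 (v : ℂ × ℂ) : ℂ × ℂ := ((starRingEnd ℂ) v.1, (starRingEnd ℂ) v.2)

/-- Action of a `2×2` complex matrix on `ℂ²` (written as `ℂ × ℂ`). -/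
def matVec (A : Matrix (Fin 2) (Fin 2) ℂ) (v : ℂ × ℂ) : ℂ × ℂ :=
  (A 0 0 * v.1 + A 0 1 * v.2, A 1 0 * v.1 + A 1 1 * v.2)

/-- The operator norm of a matrix, with respect to the Euclidean (L²) norm on `ℂ²`. -/
def matrixOpNorm (A : Matrix (Fin 2) (Fin 2) ℂ) : ℝ :=
  ‖(Matrix.toEuclideanCLM (𝕜 := ℂ) A :
      EuclideanSpace ℂ (Fin 2) →L[ℂ] EuclideanSpace ℂ (Fin 2))‖

/-- Auxiliary: squared Euclidean norm on `ℂ × ℂ`. -/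
def nsq (v : ℂ × ℂ) : ℝ := Complex.normSq v.1 + Complex.normSq v.2

/-- Auxiliary: the identification `ℂ × ℂ ≃ EuclideanSpace ℂ (Fin 2)`. -/
def ev (v : ℂ × ℂ) : EuclideanSpace ℂ (Fin 2) := (WithLp.equiv 2 (Fin 2 → ℂ)).symm ![v.1, v.2]

lemma ev_matVec (A : Matrix (Fin 2) (Fin 2) ℂ) (v : ℂ × ℂ) :
    Matrix.toEuclideanCLM (𝕜 := ℂ) A (ev v) = ev (matVec A v) := by
  simp [ev, Matrix.toEuclideanCLM_toLp, matVec]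

lemma norm_ev_sq (v : ℂ × ℂ) : ‖ev v‖ ^ 2 = nsq v := by
  rw [EuclideanSpace.norm_eq, Real.sq_sqrt (by positivity), Fin.sum_univ_two]
  simp [ev, nsq, Complex.sq_norm]

lemma omega_formula (u w : ℂ × ℂ) :
    omegaSt (u + w) (Complex.I • u - Complex.I • w) = nsq u - nsq w := by
  simp [omegaSt, nsq, Complex.normSq_apply, Complex.ext_iff, mul_comm]
  ring

lemma nsq_nonneg (v : ℂ × ℂ) : 0 ≤ nsq v := by
  have := Complex.normSq_nonneg v.1
  have := Complex.normSq_nonneg v.2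
  unfold nsq; linarith

lemma nsq_pos {v : ℂ × ℂ} (hv : v ≠ 0) : 0 < nsq v := by
  rcases lt_or_eq_of_le (nsq_nonneg v) with h | h
  · exact h
  · exfalso
    apply hv
    have h1 := Complex.normSq_nonneg v.1
    have h2 := Complex.normSq_nonneg v.2
    have hv1 : Complex.normSq v.1 = 0 := by unfold nsq at h; linarith
    have hv2 : Complex.normSq v.2 = 0 := by unfold nsq at h; linarith
    have : v.1 = 0 := by rwa [Complex.normSq_eq_zero] at hv1
    have : v.2 = 0 := by rwa [Complex.normSq_eq_zero] at hv2
    exact Prod.ext ‹v.1 = 0› this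

lemma nsq_conj2 (v : ℂ × ℂ) : nsq (conj2 v) = nsq v := by
  simp [nsq, conj2]

lemma conj2_conj2 (v : ℂ × ℂ) : conj2 (conj2 v) = v := by
  simp [conj2]

lemma conj2_ne_zero {v : ℂ × ℂ} (hv : v ≠ 0) : conj2 v ≠ 0 := by
  intro h
  apply hv
  have := congrArg conj2 h
  rwa [conj2_conj2, show conj2 0 = 0 by simp [conj2, Prod.ext_iff]] at this

lemma Jst_apply (v : ℂ × ℂ) : Jst v = Complex.I • v := rfl

/-- A linear complex structure `J` on `ℂ²` with `J_st + J` invertible is tamed by the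
standard symplectic form, i.e. `ω_st(V, JV) > 0` for `V ≠ 0`, if and only if the operator
norm of its complex matrix `A` (defined by `(J_st + J)(A·V) = (J_st − J)(conj V)`) is
strictly less than `1`. -/
theorem tamed_iff_opNorm_lt_one (J : (ℂ × ℂ) →ₗ[ℝ] (ℂ × ℂ))
    (hJJ : J.comp J = -LinearMap.id)
    (hinv : Function.Bijective (Jst + J))
    (A : Matrix (Fin 2) (Fin 2) ℂ)
    (hA : ∀ V : ℂ × ℂ, (Jst + J) (matVec A V) = (Jst - J) (conj2 V)) :
    (∀ V : ℂ × ℂ, V ≠ 0 → 0 < omegaSt V (J V)) ↔ matrixOpNorm A < 1 := by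
  set f := (Matrix.toEuclideanCLM (𝕜 := ℂ) A :
      EuclideanSpace ℂ (Fin 2) →L[ℂ] EuclideanSpace ℂ (Fin 2)) with hf
  -- key identity: (Jst + J)(matVec A (conj2 W)) = (Jst - J) W
  have key : ∀ W : ℂ × ℂ, (Jst + J) (matVec A (conj2 W)) = (Jst - J) W := by
    intro W
    rw [hA (conj2 W), conj2_conj2]
  -- J on vectors of the form W + A·conj W
  have hJform : ∀ W : ℂ × ℂ, J (W + matVec A (conj2 W)) =
      Complex.I • W - Complex.I • matVec A (conj2 W) := by
    intro W
    have h1 := key W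
    rw [LinearMap.add_apply, LinearMap.sub_apply, Jst_apply, Jst_apply] at h1
    have h2 : J (matVec A (conj2 W)) =
        Complex.I • W - J W - Complex.I • matVec A (conj2 W) := by
      have := h1
      rw [eq_sub_iff_add_eq] at this ⊢
      rw [← this]; abel
    rw [map_add, h2]; abel
  -- (Jst + J)(W + A conj W) = 2 i W
  have hg : ∀ W : ℂ × ℂ, (Jst + J) (W + matVec A (conj2 W)) =
      Complex.I • W + Complex.I • W := by
    intro W
    rw [map_add, key W, LinearMap.add_apply, LinearMap.sub_apply, Jst_apply]
    abel
  -- injectivity-style fact: W + A conj W = 0 → W = 0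
  have hker : ∀ W : ℂ × ℂ, W + matVec A (conj2 W) = 0 → W = 0 := by
    intro W h
    have h0 := hg W
    rw [h, map_zero] at h0
    have : (Complex.I + Complex.I) • W = 0 := by
      rw [add_smul]; exact h0.symm
    have hIne : (Complex.I + Complex.I) ≠ 0 := by
      simp [Complex.ext_iff]
    exact (smul_eq_zero.mp this).resolve_left hIne
  -- surjectivity: every V is W + A conj W
  have hsurj : ∀ V : ℂ × ℂ, ∃ W : ℂ × ℂ, W + matVec A (conj2 W) = V := by
    intro V
    refine ⟨(-(Complex.I) / 2) • ((Jst + J) V), ?_⟩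
    apply hinv.injective
    rw [hg]
    rw [smul_smul, ← add_smul]
    have hs : Complex.I * (-Complex.I / 2) + Complex.I * (-Complex.I / 2) = 1 := by
      linear_combination -Complex.I_sq
    rw [hs, one_smul]
  -- the squared-norm inequality characterization
  have hchar : (∀ V : ℂ × ℂ, V ≠ 0 → 0 < omegaSt V (J V)) ↔
      (∀ x : ℂ × ℂ, x ≠ 0 → nsq (matVec A x) < nsq x) := by
    constructor
    · intro htame x hx
      set W := conj2 x with hW
      have hWx : conj2 W = x := conj2_conj2 x
      set V := W + matVec A (conj2 W) with hV
      have hVne : V ≠ 0 := by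
        intro h
        exact conj2_ne_zero hx (hker W h)
      have := htame V hVne
      rw [hV, hJform W, omega_formula] at this
      rw [hWx] at this
      have hnW : nsq W = nsq x := nsq_conj2 x
      linarith
    · intro hlt V hV
      obtain ⟨W, hW⟩ := hsurj V
      have hWne : W ≠ 0 := by
        intro h
        apply hV
        rw [← hW, h]
        simp [matVec, conj2]
      rw [← hW, hJform W, omega_formula]
      have := hlt (conj2 W) (conj2_ne_zero hWne)
      rw [nsq_conj2] at this
      linarith
  rw [hchar]
  -- transfer to EuclideanSpace
  have hfe : ∀ z : EuclideanSpace ℂ (Fin 2), z ≠ 0 → ∃ v : ℂ × ℂ, v ≠ 0 ∧ ev v = z := by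
    intro z hz
    refine ⟨(z 0, z 1), ?_, ?_⟩
    · intro h
      apply hz
      have h0 : z 0 = 0 := congrArg Prod.fst h
      have h1 : z 1 = 0 := congrArg Prod.snd h
      ext i
      fin_cases i <;> simpa
    · ext i
      fin_cases i <;> rfl
  have hnorm_char : (∀ x : ℂ × ℂ, x ≠ 0 → nsq (matVec A x) < nsq x) ↔
      (∀ z : EuclideanSpace ℂ (Fin 2), z ≠ 0 → ‖f z‖ < ‖z‖) := by
    constructor
    · intro h z hz
      obtain ⟨v, hv, rfl⟩ := hfe z hz
      have h1 : ‖f (ev v)‖ ^ 2 < ‖ev v‖ ^ 2 := by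
        rw [hf, ev_matVec, norm_ev_sq, norm_ev_sq]
        exact h v hv
      by_contra hcon
      push_neg at hcon
      exact absurd (pow_le_pow_left₀ (norm_nonneg _) hcon 2) (not_le.mpr h1)
    · intro h x hx
      have hevx : ev x ≠ 0 := by
        intro hh
        have : ‖ev x‖ ^ 2 = 0 := by rw [hh]; simp
        rw [norm_ev_sq] at this
        exact absurd this (ne_of_gt (nsq_pos hx))
      have := h (ev x) hevx
      have h2 : ‖f (ev x)‖ ^ 2 < ‖ev x‖ ^ 2 :=
        pow_lt_pow_left₀ this (norm_nonneg _) (by norm_num)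
      rwa [hf, ev_matVec, norm_ev_sq, norm_ev_sq] at h2
  rw [hnorm_char]
  unfold matrixOpNorm
  rw [← hf]
  constructor
  · -- pointwise strict contraction → opNorm < 1, via compactness of the sphere
    intro h
    obtain ⟨x₀, hx₀s, hx₀max⟩ := (isCompact_sphere (0 : EuclideanSpace ℂ (Fin 2)) 1).exists_isMaxOn
      (NormedSpace.sphere_nonempty.mpr zero_le_one)
      (f.continuous.norm.continuousOn)
    have hx₀n : ‖x₀‖ = 1 := by simpa using hx₀s
    have hx₀ne : x₀ ≠ 0 := by
      intro hh; rw [hh] at hx₀n; simp at hx₀n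
    have hflt : ‖f x₀‖ < 1 := by
      have := h x₀ hx₀ne
      rwa [hx₀n] at this
    have hbound : ‖f‖ ≤ ‖f x₀‖ := by
      apply f.opNorm_le_bound (norm_nonneg _)
      intro y
      rcases eq_or_ne y 0 with rfl | hy
      · simp
      · have hyn : (0:ℝ) < ‖y‖ := norm_pos_iff.mpr hy
        have hsphere : ((‖y‖:ℂ)⁻¹ • y) ∈ Metric.sphere (0 : EuclideanSpace ℂ (Fin 2)) 1 := by
          simp only [mem_sphere_iff_norm, sub_zero, norm_smul, norm_inv, Complex.norm_real,
            Real.norm_eq_abs, abs_of_pos hyn]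
          field_simp
        have := hx₀max hsphere
        simp only [Set.mem_setOf_eq] at this
        rw [map_smul, norm_smul, norm_inv, Complex.norm_real, Real.norm_eq_abs,
          abs_of_pos hyn] at this
        calc ‖f y‖ = ‖y‖ * (‖y‖⁻¹ * ‖f y‖) := by field_simp
        _ ≤ ‖y‖ * ‖f x₀‖ := by
            apply mul_le_mul_of_nonneg_left this (le_of_lt hyn)
        _ = ‖f x₀‖ * ‖y‖ := mul_comm _ _
    linarith
  · intro h z hz
    calc ‖f z‖ ≤ ‖f‖ * ‖z‖ := f.le_opNorm z
    _ < 1 * ‖z‖ := by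
        apply mul_lt_mul_of_pos_right h (norm_pos_iff.mpr hz)
    _ = ‖z‖ := one_mul _
end
end
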